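/- Let (X,σ) be a shift space with h_top(X,σ) = 0 whose language 𝓛 contains a collection 𝓖 ⊆ 𝓛 with (S)-specification with gap size t. Then for every v, w ∈ 𝓖 there exist words y, z ∈ 𝓛_t such that v y w = w z v (in particular v𝓛_t w ∩ w𝓛_t v ≠ ∅). -/

import Mathlib

open MeasureTheory Filter Topology
open scoped ENNReal

/-- The full two-sided shift on `p` symbols. -/
abbrev FullShift (p : ℕ) : Type := ℤ → Fin p

/-- The left shift map. -/
def shiftMap {p : ℕ} : FullShift p → FullShift p := fun x n => x (n + 1)

/-- A (two-sided) shift space: a nonempty closed shift-invariant subset of the full shift. -/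
def IsShiftSpace {p : ℕ} (X : Set (FullShift p)) : Prop :=
  X.Nonempty ∧ IsClosed X ∧ shiftMap '' X = X

/-- `x` spells the word `w` starting at position `k`. -/
def spellsAt {p : ℕ} (x : FullShift p) (k : ℤ) (w : List (Fin p)) : Prop :=
  ∀ i : Fin w.length, x (k + (i : ℕ)) = w.get i

/-- The language of a shift space: all finite words occurring in its sequences. -/
def language {p : ℕ} (X : Set (FullShift p)) : Set (List (Fin p)) :=
  {w | ∃ x ∈ X, ∃ k : ℤ, spellsAt x k w}

/-- Words of length `n` in a collection `D`. -/
def wordsOfLen {p : ℕ} (D : Set (List (Fin p))) (n : ℕ) : Set (List (Fin p)) :=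
  {w ∈ D | w.length = n}

/-- Exponential growth rate `h(D) = limsup (1/n) log #D_n` of a collection of words. -/
noncomputable def growth {p : ℕ} (D : Set (List (Fin p))) : ℝ :=
  Filter.atTop.limsup fun n : ℕ => Real.log ((wordsOfLen D n).ncard) / n

/-- Topological entropy of a shift space (= the growth rate of its language). -/
noncomputable def htop {p : ℕ} (X : Set (FullShift p)) : ℝ := growth (language X)

/-- `glueWords m w v = w 0 ++ v 0 ++ w 1 ++ v 1 ++ ⋯ ++ v (m-1) ++ w m`. -/
def glueWords {p : ℕ} : ℕ → (ℕ → List (Fin p)) → (ℕ → List (Fin p)) → List (Fin p)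
  | 0, w, _ => w 0
  | (m + 1), w, v => glueWords m w v ++ v m ++ w (m + 1)

/-- (S)-specification on `G ⊆ L` with gap size `t`. -/
def HasSpecS {p : ℕ} (L G : Set (List (Fin p))) (t : ℕ) : Prop :=
  ∀ (m : ℕ) (w : ℕ → List (Fin p)), (∀ i ≤ m, w i ∈ G) →
    ∃ v : ℕ → List (Fin p), (∀ i < m, v i ∈ L ∧ (v i).length = t) ∧
      glueWords m w v ∈ L

/-- The central cylinder of a word `w`, starting at position `-⌊|w|/2⌋`. -/
def centralCylinder {p : ℕ} (w : List (Fin p)) : Set (FullShift p) :=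
  {x | spellsAt x (-((w.length / 2 : ℕ) : ℤ)) w}

/-- (Per)-specification on `G` with gap size `t`: the glued word can moreover be realized by
a periodic point of period exactly `|x| + t`. -/
def HasSpecPer {p : ℕ} (X : Set (FullShift p)) (G : Set (List (Fin p))) (t : ℕ) : Prop :=
  ∀ (m : ℕ) (w : ℕ → List (Fin p)), (∀ i ≤ m, w i ∈ G) →
    ∃ v : ℕ → List (Fin p), (∀ i < m, v i ∈ language X ∧ (v i).length = t) ∧
      glueWords m w v ∈ language X ∧
      ∃ z ∈ X, shiftMap^[(glueWords m w v).length + t] z = z ∧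
        z ∈ centralCylinder (glueWords m w v)

/-- A decomposition `L = 𝓒ᵖ 𝓖 𝓒ˢ` of a language. -/
def Decomp {p : ℕ} (L Cp G Cs : Set (List (Fin p))) : Prop :=
  Cp ⊆ L ∧ G ⊆ L ∧ Cs ⊆ L ∧
    ∀ w ∈ L, ∃ u v x, u ∈ Cp ∧ v ∈ G ∧ x ∈ Cs ∧ w = u ++ v ++ x

/-- `𝓖(M)`: words of `L` decomposable with prefix and suffix of length at most `M`. -/
def GM {p : ℕ} (L Cp G Cs : Set (List (Fin p))) (M : ℕ) : Set (List (Fin p)) :=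
  {w ∈ L | ∃ u v x, u ∈ Cp ∧ v ∈ G ∧ x ∈ Cs ∧ u.length ≤ M ∧ x.length ≤ M ∧ w = u ++ v ++ x}

/-- Condition (III): uniformly controlled extension of words of `𝓖(M)` to words of `𝓖`. -/
def CondIII {p : ℕ} (L Cp G Cs : Set (List (Fin p))) : Prop :=
  ∀ M : ℕ, ∃ τ : ℕ, ∀ v ∈ GM L Cp G Cs M,
    ∃ u w : List (Fin p), u.length ≤ τ ∧ w.length ≤ τ ∧ u ++ v ++ w ∈ G

/-- Shift invariance of a measure. -/
def ShiftInvariant {p : ℕ} (μ : Measure (FullShift p)) : Prop :=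
  Measure.map shiftMap μ = μ

/-- Measure-theoretic (Kolmogorov–Sinai) entropy of a shift-invariant measure, computed via
the generating partitions into cylinders of length `n`. -/
noncomputable def entropyOf {p : ℕ} (μ : Measure (FullShift p)) : ℝ :=
  Filter.atTop.liminf fun n : ℕ =>
    (∑ w : Fin n → Fin p,
      Real.negMulLog (μ {x : FullShift p | ∀ i : Fin n, x ((i : ℕ) : ℤ) = w i}).toReal) / n

/-- `μ` is a measure of maximal entropy for the shift space `X`. -/
def IsMME {p : ℕ} (X : Set (FullShift p)) (μ : Measure (FullShift p)) : Prop :=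
  IsProbabilityMeasure μ ∧ ShiftInvariant μ ∧ μ X = 1 ∧ entropyOf μ = htop X

/-- A shift space is intrinsically ergodic if it has exactly one measure of maximal entropy. -/
def IntrinsicallyErgodic {p : ℕ} (X : Set (FullShift p)) : Prop :=
  ∃! μ : Measure (FullShift p), IsMME X μ

/-- The set of points of `X` periodic of period at most `n`. -/
def PerN {p : ℕ} (X : Set (FullShift p)) (n : ℕ) : Set (FullShift p) :=
  {x ∈ X | ∃ k, 1 ≤ k ∧ k ≤ n ∧ shiftMap^[k] x = x}

/-- The measure evenly distributed on the periodic points of period at most `n`. -/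
noncomputable def perMeasure {p : ℕ} (X : Set (FullShift p)) (n : ℕ) :
    Measure (FullShift p) :=
  (((PerN X n).ncard : ℝ≥0∞))⁻¹ •
    Measure.sum (fun x : (PerN X n) => Measure.dirac (x : FullShift p))

/-- Weak* convergence of a sequence of measures. -/
def WeakStarLimit {p : ℕ} (μs : ℕ → Measure (FullShift p)) (μ : Measure (FullShift p)) : Prop :=
  ∀ f : C(FullShift p, ℝ),
    Tendsto (fun n => ∫ x, f x ∂(μs n)) atTop (𝓝 (∫ x, f x ∂μ))

/-- `Y` is a subshift factor of `X`. -/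
def IsSubshiftFactor {p q : ℕ} (X : Set (FullShift p)) (Y : Set (FullShift q)) : Prop :=
  IsShiftSpace Y ∧ ∃ π : FullShift p → FullShift q,
    Continuous π ∧ π '' X = Y ∧ ∀ x ∈ X, π (shiftMap x) = shiftMap (π x)

private lemma glueWords_succ_front {p : ℕ} :
    ∀ (m : ℕ) (w v : ℕ → List (Fin p)),
    glueWords (m+1) w v
      = w 0 ++ (v 0 ++ glueWords m (fun i => w (i+1)) (fun i => v (i+1))) := by
  intro m
  induction m with
  | zero => intro w v; simp [glueWords]
  | succ n ih =>
      intro w v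
      show glueWords (n+1) w v ++ v (n+1) ++ w (n+2) = _
      rw [ih]
      simp [glueWords, List.append_assoc]

private lemma glueWords_head {p : ℕ} (m : ℕ) (w v : ℕ → List (Fin p)) :
    ∃ Q, glueWords m w v = w 0 ++ Q := by
  cases m with
  | zero => exact ⟨[], (List.append_nil _).symm⟩
  | succ n => rw [glueWords_succ_front]; exact ⟨_, rfl⟩

private lemma glueWords_length {p : ℕ} :
    ∀ (m : ℕ) (w v : ℕ → List (Fin p)),
    (glueWords m w v).length =
      (∑ i ∈ Finset.range (m+1), (w i).length) + ∑ i ∈ Finset.range m, (v i).length := by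
  intro m
  induction m with
  | zero => intro w v; simp [glueWords]
  | succ n ih =>
      intro w v
      show (glueWords n w v ++ v n ++ w (n+1)).length = _
      rw [List.length_append, List.length_append, ih,
        Finset.sum_range_succ (fun i => (w i).length) (n+1),
        Finset.sum_range_succ (fun i => (v i).length) n]
      ring

private lemma glueWords_drop {p : ℕ} :
    ∀ (d m : ℕ) (w v : ℕ → List (Fin p)), d ≤ m →
    ∃ P : List (Fin p),
      glueWords m w v = P ++ glueWords (m - d) (fun i => w (i+d)) (fun i => v (i+d)) ∧
      P.length = ∑ i ∈ Finset.range d, ((w i).length + (v i).length) := by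
  intro d
  induction d with
  | zero =>
      intro m w v _
      exact ⟨[], by simp, by simp⟩
  | succ d ih =>
      intro m w v hd
      obtain ⟨m', rfl⟩ : ∃ m', m = m' + 1 := ⟨m - 1, by omega⟩
      rw [glueWords_succ_front]
      obtain ⟨P, hP, hlen⟩ := ih m' (fun i => w (i+1)) (fun i => v (i+1)) (by omega)
      refine ⟨w 0 ++ v 0 ++ P, ?_, ?_⟩
      · rw [hP, show m' + 1 - (d+1) = m' - d from by omega]
        simp only [List.append_assoc]
        rfl
      · rw [Finset.sum_range_succ' (fun i => (w i).length + (v i).length) d]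
        simp [hlen]
        ring

private lemma glueWords_pair {p : ℕ} (K j : ℕ) (hj : j ≤ K) (w v : ℕ → List (Fin p)) :
    ∃ P Q : List (Fin p),
      glueWords (2*K+1) w v = P ++ (w (2*j) ++ (v (2*j) ++ (w (2*j+1) ++ Q))) ∧
      P.length = ∑ i ∈ Finset.range (2*j), ((w i).length + (v i).length) := by
  obtain ⟨P, hP, hlen⟩ := glueWords_drop (2*j) (2*K+1) w v (by omega)
  obtain ⟨r, hr⟩ : ∃ r, 2*K+1-2*j = r + 1 := ⟨2*(K-j), by omega⟩
  rw [hr] at hP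
  rw [glueWords_succ_front r (fun i => w (i + 2*j)) (fun i => v (i + 2*j))] at hP
  obtain ⟨Q, hQ⟩ := glueWords_head r (fun i => w (i + 1 + 2*j)) (fun i => v (i + 1 + 2*j))
  refine ⟨P, Q, ?_, hlen⟩
  rw [hP]
  rw [hQ, show 0 + 2*j = 2*j from by omega, show 0 + 1 + 2*j = 2*j + 1 from by omega]

private lemma wordsOfLen_finite {p : ℕ} (D : Set (List (Fin p))) (n : ℕ) :
    (wordsOfLen D n).Finite :=
  (List.finite_length_eq (Fin p) n).subset fun _ hw => hw.2

private lemma wordsOfLen_ncard_le {p : ℕ} (D : Set (List (Fin p))) (n : ℕ) :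
    (wordsOfLen D n).ncard ≤ p ^ n := by
  have hinj : Function.Injective
      (fun w : ↥(wordsOfLen D n) => fun i : Fin n => w.val.get (Fin.cast w.prop.2.symm i)) := by
    intro w1 w2 h
    apply Subtype.ext
    apply List.ext_get (by rw [w1.prop.2, w2.prop.2])
    intro i h1 h2
    have hi : i < n := by rw [← w1.prop.2]; exact h1
    have := congrFun h ⟨i, hi⟩
    simpa using this
  calc (wordsOfLen D n).ncard = Nat.card ↥(wordsOfLen D n) := (Nat.card_coe_set_eq _).symm
    _ ≤ Nat.card (Fin n → Fin p) := Nat.card_le_card_of_injective _ hinj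
    _ = p ^ n := by simp [Nat.card_eq_fintype_card]


/-- **Lemma 6.1.** If `X` has zero topological entropy and `𝓖 ⊆ 𝓛` has (S)-specification
with gap size `t`, then for all `v, w ∈ 𝓖` there exist `y, z ∈ 𝓛_t` with `vyw = wzv`. -/
theorem commuting_words_of_zero_entropy {p : ℕ} (X : Set (FullShift p))
    (hX : IsShiftSpace X) (h0 : htop X = 0)
    (G : Set (List (Fin p))) (hG : G ⊆ language X)
    (t : ℕ) (hspec : HasSpecS (language X) G t) :
    ∀ v ∈ G, ∀ w ∈ G,
      ∃ y ∈ wordsOfLen (language X) t, ∃ z ∈ wordsOfLen (language X) t,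
        v ++ y ++ w = w ++ z ++ v := by
  intro v hv w hw
  obtain ⟨fil0, hfil0, -⟩ := hspec 1 (fun i => if i = 0 then v else w)
      (by intro i _; split
          · exact hv
          · exact hw)
  obtain ⟨hy0L, hy0len⟩ := hfil0 0 one_pos
  by_cases hvw : v = w
  · exact ⟨fil0 0, ⟨hy0L, hy0len⟩, fil0 0, ⟨hy0L, hy0len⟩, by rw [hvw]⟩
  by_contra H
  push_neg at H
  set L := language X with hL
  set la := v.length with hla
  set lb := w.length with hlb
  have hab : 1 ≤ la + lb := by
    by_contra h
    exact hvw ((List.length_eq_zero_iff.mp (by omega)).trans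
      (List.length_eq_zero_iff.mp (by omega : lb = 0)).symm)
  set B := la + lb + 2*t with hB
  set W : (ℕ → Bool) → ℕ → List (Fin p) :=
    fun s i => if s (i/2) then (if i % 2 = 0 then v else w) else (if i % 2 = 0 then w else v)
    with hWdef
  have hWG : ∀ s i, W s i ∈ G := by
    intro s i
    simp only [hWdef]
    split
    · split
      · exact hv
      · exact hw
    · split
      · exact hw
      · exact hv
  have hW0 : ∀ (s : ℕ → Bool) (j : ℕ), W s (2*j) = if s j then v else w := by
    intro s j
    simp only [hWdef]
    rw [show (2*j)/2 = j from by omega]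
    simp [show (2*j) % 2 = 0 from by omega]
  have hW1 : ∀ (s : ℕ → Bool) (j : ℕ), W s (2*j+1) = if s j then w else v := by
    intro s j
    simp only [hWdef]
    rw [show (2*j+1)/2 = j from by omega]
    simp [show (2*j+1) % 2 = 1 from by omega]
  have sumW : ∀ (s : ℕ → Bool) (j : ℕ),
      ∑ i ∈ Finset.range (2*j), (W s i).length = j * (la + lb) := by
    intro s j
    induction j with
    | zero => simp
    | succ n ih =>
        rw [show 2*(n+1) = (2*n) + 1 + 1 from by ring, Finset.sum_range_succ,
          Finset.sum_range_succ, ih, hW0 s n, hW1 s n]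
        rcases Bool.eq_false_or_eq_true (s n) with h | h <;> rw [h] <;> simp <;> ring
  have key : ∀ K : ℕ,
      2^(K+1) ≤ (wordsOfLen L ((K+1)*(la+lb) + (2*K+1)*t)).ncard := by
    intro K
    set n := (K+1)*(la+lb) + (2*K+1)*t with hn
    set ext : (Fin (K+1) → Bool) → (ℕ → Bool) :=
      fun s i => if h : i < K+1 then s ⟨i, h⟩ else false with hext
    have hspecAll : ∀ s : Fin (K+1) → Bool,
        ∃ fil : ℕ → List (Fin p), (∀ i < 2*K+1, fil i ∈ L ∧ (fil i).length = t) ∧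
          glueWords (2*K+1) (W (ext s)) fil ∈ L :=
      fun s => hspec (2*K+1) (W (ext s)) (fun i _ => hWG _ _)
    choose fil hfil hglue using hspecAll
    set F : (Fin (K+1) → Bool) → List (Fin p) :=
      fun s => glueWords (2*K+1) (W (ext s)) (fil s) with hF
    have hFlen : ∀ s, (F s).length = n := by
      intro s
      rw [hF]
      dsimp only
      rw [glueWords_length, show 2*K+1+1 = 2*(K+1) from by ring, sumW]
      have hsum : ∑ i ∈ Finset.range (2*K+1), (fil s i).length = (2*K+1) * t := by
        rw [Finset.sum_congr rfl (fun i hi => (hfil s i (Finset.mem_range.mp hi)).2)]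
        simp [mul_comm]
      rw [hsum]
    have hFmem : ∀ s, F s ∈ wordsOfLen L n := fun s => ⟨hglue s, hFlen s⟩
    have hFinj : Function.Injective F := by
      intro s1 s2 h12
      funext j
      by_contra hne
      have hjK : (j : ℕ) ≤ K := by omega
      obtain ⟨P1, Q1, hdec1, hlen1⟩ := glueWords_pair K j hjK (W (ext s1)) (fil s1)
      obtain ⟨P2, Q2, hdec2, hlen2⟩ := glueWords_pair K j hjK (W (ext s2)) (fil s2)
      have hPlen : ∀ (s : Fin (K+1) → Bool),
          ∑ i ∈ Finset.range (2*(j:ℕ)), ((W (ext s) i).length + (fil s i).length)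
            = (j:ℕ) * (la+lb) + 2*(j:ℕ)*t := by
        intro s
        rw [Finset.sum_add_distrib, sumW]
        have hsum : ∑ i ∈ Finset.range (2*(j:ℕ)), (fil s i).length = 2*(j:ℕ)*t := by
          rw [Finset.sum_congr rfl (fun i hi => (hfil s i (by
            have := Finset.mem_range.mp hi; omega)).2)]
          simp [mul_comm]
        rw [hsum]
      have hPl : P1.length = P2.length := by
        rw [hlen1, hlen2, hPlen, hPlen]
      have hRReq : P1 ++ (W (ext s1) (2*(j:ℕ)) ++ (fil s1 (2*(j:ℕ)) ++ (W (ext s1) (2*(j:ℕ)+1) ++ Q1)))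
          = P2 ++ (W (ext s2) (2*(j:ℕ)) ++ (fil s2 (2*(j:ℕ)) ++ (W (ext s2) (2*(j:ℕ)+1) ++ Q2))) := by
        rw [← hdec1, ← hdec2]
        exact h12
      have hRR := (List.append_inj hRReq hPl).2
      have hexts : ∀ s : Fin (K+1) → Bool, ext s (j:ℕ) = s j := by
        intro s
        simp [hext]
        exact fun _ => Fin.is_le j
      have hy := hfil s1 (2*(j:ℕ)) (by omega)
      have hz := hfil s2 (2*(j:ℕ)) (by omega)
      rw [hW0, hW1, hW0, hW1, hexts, hexts] at hRR
      have extract : ∀ (y z Q Q' : List (Fin p)), y.length = t → z.length = t →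
          v ++ (y ++ (w ++ Q)) = w ++ (z ++ (v ++ Q')) → v ++ y ++ w = w ++ z ++ v := by
        intro y z Q Q' hyt hzt heq
        have e1 : v ++ (y ++ (w ++ Q)) = (v ++ y ++ w) ++ Q := by
          simp [List.append_assoc]
        have e2 : w ++ (z ++ (v ++ Q')) = (w ++ z ++ v) ++ Q' := by
          simp [List.append_assoc]
        rw [e1, e2] at heq
        refine (List.append_inj heq ?_).1
        simp only [List.length_append, hyt, hzt]
        omega
      rcases Bool.eq_false_or_eq_true (s1 j) with h1 | h1 <;>
        rcases Bool.eq_false_or_eq_true (s2 j) with h2 | h2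
      · exact hne (h1.trans h2.symm)
      · rw [h1, h2] at hRR
        simp only [if_true, if_false, Bool.false_eq_true] at hRR
        exact H (fil s1 (2*(j:ℕ))) ⟨hy.1, hy.2⟩ (fil s2 (2*(j:ℕ))) ⟨hz.1, hz.2⟩
          (extract _ _ _ _ hy.2 hz.2 hRR)
      · rw [h1, h2] at hRR
        simp only [if_true, if_false, Bool.false_eq_true] at hRR
        exact H (fil s2 (2*(j:ℕ))) ⟨hz.1, hz.2⟩ (fil s1 (2*(j:ℕ))) ⟨hy.1, hy.2⟩
          (extract _ _ _ _ hz.2 hy.2 hRR.symm)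
      · exact hne (h1.trans h2.symm)
    have hfin : (wordsOfLen L n).Finite := wordsOfLen_finite L n
    have := hfin.to_subtype
    calc 2^(K+1) = Nat.card (Fin (K+1) → Bool) := by
          simp [Nat.card_eq_fintype_card]
      _ ≤ Nat.card ↥(wordsOfLen L n) := Nat.card_le_card_of_injective
            (fun s => (⟨F s, hFmem s⟩ : ↥(wordsOfLen L n)))
            (fun s1 s2 h => hFinj (congrArg Subtype.val h))
      _ = (wordsOfLen L n).ncard := Nat.card_coe_set_eq _
  -- entropy contradiction
  have hp1 : 1 ≤ p := by
    obtain ⟨x0, _⟩ := hX.1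
    exact (x0 0).pos
  have hbdd : Filter.IsBoundedUnder (· ≤ ·) Filter.atTop
      (fun n : ℕ => Real.log ((wordsOfLen L n).ncard) / n) := by
    refine ⟨Real.log p, Filter.eventually_map.mpr (Filter.Eventually.of_forall fun n => ?_)⟩
    have hlp : (0:ℝ) ≤ Real.log p := Real.log_nonneg (by exact_mod_cast hp1)
    rcases Nat.eq_zero_or_pos n with rfl | hn
    · simpa using hlp
    · have h2 : Real.log ((wordsOfLen L n).ncard) ≤ n * Real.log p := by
        rcases Nat.eq_zero_or_pos (wordsOfLen L n).ncard with h | h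
        · rw [h]
          simpa using by positivity
        · calc Real.log ((wordsOfLen L n).ncard)
              ≤ Real.log ((p:ℝ)^n) := by
                apply Real.log_le_log (by exact_mod_cast h)
                exact_mod_cast wordsOfLen_ncard_le L n
            _ = n * Real.log p := by rw [Real.log_pow]
      show Real.log ((wordsOfLen L n).ncard) / n ≤ Real.log p
      rw [div_le_iff₀ (by exact_mod_cast hn)]
      linarith
  have hfreq : ∃ᶠ n in Filter.atTop,
      Real.log 2 / (B:ℝ) ≤ (fun n : ℕ => Real.log ((wordsOfLen L n).ncard) / n) n := by
    rw [Filter.frequently_atTop]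
    intro N
    set K := N with hK
    set n := (K+1)*(la+lb) + (2*K+1)*t with hn
    have hmul : (K+1) ≤ (K+1)*(la+lb) := Nat.le_mul_of_pos_right _ (by omega)
    have hnN : N ≤ n := by omega
    have hn0 : 0 < n := by omega
    refine ⟨n, hnN, ?_⟩
    have hcard := key K
    have hlog : ((K:ℝ)+1) * Real.log 2 ≤ Real.log ((wordsOfLen L n).ncard) := by
      have h2n : (2:ℝ)^(K+1) ≤ ((wordsOfLen L n).ncard : ℝ) := by exact_mod_cast hcard
      calc ((K:ℝ)+1)*Real.log 2 = Real.log ((2:ℝ)^(K+1)) := by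
            rw [Real.log_pow]
            push_cast
            ring
        _ ≤ _ := Real.log_le_log (by positivity) h2n
    have hBpos : (0:ℝ) < (B:ℝ) := by exact_mod_cast (by omega : 0 < B)
    have hnB : (n:ℝ) ≤ ((K:ℝ)+1) * B := by
      have e : (K+1)*B = (K+1)*(la+lb) + (2*K+2)*t := by rw [hB]; ring
      have e2 : (2*K+1)*t ≤ (2*K+2)*t := Nat.mul_le_mul_right t (by omega)
      have : n ≤ (K+1)*B := by omega
      exact_mod_cast this
    have hl2 : (0:ℝ) ≤ Real.log 2 := Real.log_nonneg (by norm_num)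
    calc Real.log 2 / (B:ℝ) ≤ (((K:ℝ)+1) * Real.log 2) / n := by
          rw [div_le_div_iff₀ hBpos (by exact_mod_cast hn0)]
          nlinarith
      _ ≤ Real.log ((wordsOfLen L n).ncard) / n := by
          gcongr
  have hle := Filter.le_limsup_of_frequently_le hfreq hbdd
  have h0' : Filter.atTop.limsup
      (fun n : ℕ => Real.log ((wordsOfLen L n).ncard) / n) = 0 := h0
  rw [h0'] at hle
  have hpos : 0 < Real.log 2 / (B:ℝ) :=
    div_pos (Real.log_pos (by norm_num)) (by exact_mod_cast (by omega : 0 < B))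
  linarith
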